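/- Let d be a metric on a finite set D of n points, let γ > 1, and let C=(C_1,…,C_k) be an (α,γ)-clustering of D. Then for all i≠j and all x,y∈C_i, d(x,y) ≤ (2/(γ−1))·d̄(x,C_j), where d̄(x,C_j) = (1/|C_j|)·Σ_{z∈C_j} d(x,z). -/

import Mathlib

open Finset

/-- Average distance from `x` to the points of the cluster `C`
(excluding `x` itself if `x ∈ C`; note `dist x x = 0`). -/
noncomputable def avgD {α : Type*} [DecidableEq α] [MetricSpace α]
    (x : α) (C : Finset α) : ℝ :=
  (∑ y ∈ C, dist x y) / (if x ∈ C then ((C.card : ℝ) - 1) else (C.card : ℝ))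

/-- `C` is a `k`-clustering of the finite set `D`: a partition of `D` into `k`
nonempty clusters. -/
def IsClustering {α : Type*} [DecidableEq α] (D : Finset α) {k : ℕ}
    (C : Fin k → Finset α) : Prop :=
  (∀ i, (C i).Nonempty) ∧ (∀ i j, i ≠ j → Disjoint (C i) (C j)) ∧
    Finset.univ.biUnion C = D

/-- `C` is an `(a, γ)`-clustering of `D`: a `k`-clustering whose clusters all
have at least `a·|D|` points, and every point is (on average) at least a factor
`γ` closer to its own cluster than to any other cluster. -/
def IsAGClustering {α : Type*} [DecidableEq α] [MetricSpace α]
    (D : Finset α) (a γ : ℝ) {k : ℕ} (C : Fin k → Finset α) : Prop :=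
  IsClustering D C ∧ (∀ i, a * (D.card : ℝ) ≤ ((C i).card : ℝ)) ∧
    (∀ i j, i ≠ j → ∀ x ∈ C i, γ * avgD x (C i) ≤ avgD x (C j))

/-- in an `(a, γ)`-clustering with `γ > 1`, for `x, y ∈ C i` and
any other cluster `C j`: `d(x, y) ≤ (2/(γ−1))·d̄(x, C j)`. -/
theorem ag_clustering_intra_cluster_distance_bound
    {α : Type*} [DecidableEq α] [MetricSpace α]
    (D : Finset α) (a γ : ℝ) (hγ : 1 < γ)
    {k : ℕ} (C : Fin k → Finset α) (hC : IsAGClustering D a γ C)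
    (i j : Fin k) (hij : i ≠ j) (x : α) (hx : x ∈ C i) (y : α) (hy : y ∈ C i) :
    dist x y ≤ (2 / (γ - 1)) * avgD x (C j) := by
  obtain ⟨⟨hne, hdisj, -⟩, -, hγcond⟩ := hC
  have hxj : x ∉ C j := fun h => (Finset.disjoint_left.mp (hdisj i j hij)) hx h
  have hyj : y ∉ C j := fun h => (Finset.disjoint_left.mp (hdisj i j hij)) hy h
  have hnjpos : (0 : ℝ) < ((C j).card : ℝ) := by
    exact_mod_cast Finset.card_pos.mpr (hne j)
  -- avgD over C j rewrites
  have hAx : avgD x (C j) = (∑ z ∈ C j, dist x z) / ((C j).card : ℝ) := by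
    simp [avgD, hxj]
  have hAy : avgD y (C j) = (∑ z ∈ C j, dist y z) / ((C j).card : ℝ) := by
    simp [avgD, hyj]
  have hAxnn : 0 ≤ avgD x (C j) := by
    rw [hAx]
    apply div_nonneg _ hnjpos.le
    exact Finset.sum_nonneg fun z _ => dist_nonneg
  by_cases hxy : x = y
  · subst hxy
    simp only [dist_self]
    exact mul_nonneg (div_nonneg (by norm_num) (by linarith)) hAxnn
  -- x ≠ y, so |C i| ≥ 2
  have h2 : 2 ≤ (C i).card := by
    have : ({x, y} : Finset α) ⊆ C i := by
      intro z hz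
      rcases Finset.mem_insert.mp hz with h | h
      · exact h ▸ hx
      · exact (Finset.mem_singleton.mp h) ▸ hy
    calc 2 = ({x, y} : Finset α).card := (Finset.card_pair hxy).symm
      _ ≤ (C i).card := Finset.card_le_card this
  have hni : (2 : ℝ) ≤ ((C i).card : ℝ) := by exact_mod_cast h2
  have hd1 : (0 : ℝ) < ((C i).card : ℝ) - 1 := by linarith
  -- Step A : dist x y ≤ avgD x (C i) + avgD y (C i)
  have hsumA : ((C i).card : ℝ) * dist x y ≤
      (∑ z ∈ C i, dist x z) + (∑ z ∈ C i, dist y z) := by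
    have : ∀ z ∈ C i, dist x y ≤ dist x z + dist y z := by
      intro z _
      calc dist x y ≤ dist x z + dist z y := dist_triangle x z y
        _ = dist x z + dist y z := by rw [dist_comm z y]
    calc ((C i).card : ℝ) * dist x y = ∑ _z ∈ C i, dist x y := by
          rw [Finset.sum_const, nsmul_eq_mul]
      _ ≤ ∑ z ∈ C i, (dist x z + dist y z) := Finset.sum_le_sum this
      _ = _ := Finset.sum_add_distrib
  have hstepA : dist x y ≤ avgD x (C i) + avgD y (C i) := by
    have hax : avgD x (C i) = (∑ z ∈ C i, dist x z) / (((C i).card : ℝ) - 1) := by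
      simp [avgD, hx]
    have hay : avgD y (C i) = (∑ z ∈ C i, dist y z) / (((C i).card : ℝ) - 1) := by
      simp [avgD, hy]
    rw [hax, hay, ← add_div, le_div_iff₀ hd1]
    nlinarith [dist_nonneg (x := x) (y := y)]
  -- Step B : avgD y (C j) ≤ dist x y + avgD x (C j)
  have hstepB : avgD y (C j) ≤ dist x y + avgD x (C j) := by
    have hsum : (∑ z ∈ C j, dist y z) ≤
        ((C j).card : ℝ) * dist x y + ∑ z ∈ C j, dist x z := by
      have : ∀ z ∈ C j, dist y z ≤ dist x y + dist x z := by
        intro z _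
        calc dist y z ≤ dist y x + dist x z := dist_triangle y x z
          _ = dist x y + dist x z := by rw [dist_comm y x]
      calc (∑ z ∈ C j, dist y z) ≤ ∑ z ∈ C j, (dist x y + dist x z) :=
            Finset.sum_le_sum this
        _ = ((C j).card : ℝ) * dist x y + ∑ z ∈ C j, dist x z := by
            rw [Finset.sum_add_distrib, Finset.sum_const, nsmul_eq_mul]
    rw [hAx, hAy, div_le_iff₀ hnjpos, add_mul, div_mul_cancel₀ _ hnjpos.ne']
    linarith [hsum]
  -- γ-condition
  have hgx : γ * avgD x (C i) ≤ avgD x (C j) := hγcond i j hij x hx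
  have hgy : γ * avgD y (C i) ≤ avgD y (C j) := hγcond i j hij y hy
  -- combine : γ * d ≤ 2 * A_x + d
  have hkey : (γ - 1) * dist x y ≤ 2 * avgD x (C j) := by nlinarith
  rw [div_mul_eq_mul_div, le_div_iff₀ (by linarith : (0:ℝ) < γ - 1)]
  nlinarith
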